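/- Let 0 < α < 1 and λ > 0 be real numbers, and consider the ratio R(t) = E_{1−α}(λ t^{1−α}) / e^{λ t}, where E_{1−α}(z) = ∑_{k=0}^∞ z^k / Γ(k(1−α)+1). Then as t → ∞: if λ < 1 then R(t) → 0, and if λ > 1 then R(t) → ∞. (In the paper, λ = (p+1)κ, so for κ < 1/(p+1) the fractional solution becomes negligible relative to the conventional solution, while for κ > 1/(p+1) it dominates.) -/

import Mathlib

open Real Filter


lemma aux_fact_le_gamma (x : ℝ) (hx : 0 ≤ x) :
    (Nat.factorial ⌊x⌋₊ : ℝ) ≤ 2 * Real.Gamma (x + 1) := by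
  have hmono := Real.Gamma_strictMonoOn_Ici.monotoneOn
  rcases le_or_gt 1 x with h1 | h1
  · have hfl1 : (1 : ℕ) ≤ ⌊x⌋₊ := Nat.le_floor (by exact_mod_cast h1)
    have hfl : ((⌊x⌋₊ : ℝ)) ≤ x := Nat.floor_le hx
    have hle : Real.Gamma ((⌊x⌋₊ : ℝ) + 1) ≤ Real.Gamma (x + 1) := by
      apply hmono
      · simp only [Set.mem_Ici]
        have : (1:ℝ) ≤ (⌊x⌋₊ : ℝ) := by exact_mod_cast hfl1
        linarith
      · simp only [Set.mem_Ici]; linarith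
      · linarith
    rw [Real.Gamma_nat_eq_factorial] at hle
    have hpos : 0 < Real.Gamma (x + 1) := Real.Gamma_pos_of_pos (by linarith)
    linarith
  · have h0 : ⌊x⌋₊ = 0 := Nat.floor_eq_zero.2 h1
    rw [h0]
    have heq : Real.Gamma (x + 1 + 1) = (x + 1) * Real.Gamma (x + 1) :=
      Real.Gamma_add_one (by positivity)
    have h2 : (1 : ℝ) ≤ Real.Gamma (x + 1 + 1) := by
      have := hmono (Set.mem_Ici.2 le_rfl) (Set.mem_Ici.2 (by linarith : (2:ℝ) ≤ x + 1 + 1))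
        (by linarith)
      rwa [Real.Gamma_two] at this
    have hpos : 0 < Real.Gamma (x + 1) := Real.Gamma_pos_of_pos (by linarith)
    rw [heq] at h2
    simp only [Nat.factorial_zero, Nat.cast_one]
    nlinarith

lemma aux_gamma_le_fact (x : ℝ) (hx : 1 ≤ x) :
    Real.Gamma (x + 1) ≤ (Nat.factorial ⌈x⌉₊ : ℝ) := by
  have hmono := Real.Gamma_strictMonoOn_Ici.monotoneOn
  have hc : x ≤ (⌈x⌉₊ : ℝ) := Nat.le_ceil x
  have hle : Real.Gamma (x + 1) ≤ Real.Gamma ((⌈x⌉₊ : ℝ) + 1) := by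
    apply hmono
    · simp only [Set.mem_Ici]; linarith
    · simp only [Set.mem_Ici]; linarith
    · linarith
  rwa [Real.Gamma_nat_eq_factorial] at hle

lemma aux_fiber_card (μ : ℝ) (hμ0 : 0 < μ) (N : ℕ) (hN : 1 / μ ≤ N) (n b : ℕ) :
    ({a ∈ Finset.range n | ⌊(a : ℝ) * μ⌋₊ = b} : Finset ℕ).card ≤ N := by
  set c := ⌈(b : ℝ) / μ⌉₊ with hc
  have hsub : ({a ∈ Finset.range n | ⌊(a : ℝ) * μ⌋₊ = b} : Finset ℕ) ⊆ Finset.Ico c (c + N) := by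
    intro k hk
    simp only [Finset.mem_filter, Finset.mem_range] at hk
    obtain ⟨-, hkb⟩ := hk
    have hknn : (0:ℝ) ≤ (k:ℝ) * μ := by positivity
    have hlow : (b : ℝ) ≤ (k : ℝ) * μ := by
      rw [← hkb]; exact Nat.floor_le hknn
    have hhigh : (k : ℝ) * μ < (b : ℝ) + 1 := by
      rw [← hkb]; exact Nat.lt_floor_add_one _
    have hck : c ≤ k := by
      rw [hc, Nat.ceil_le]
      rw [div_le_iff₀ hμ0]
      linarith
    have hkc : k < c + N := by
      have hcb : (b : ℝ) / μ ≤ (c : ℝ) := Nat.le_ceil _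
      have : (k : ℝ) < (c : ℝ) + (N : ℝ) := by
        have hk2 : (k : ℝ) < ((b:ℝ) + 1) / μ := by
          rw [lt_div_iff₀ hμ0]; linarith
        have : ((b:ℝ) + 1) / μ = (b:ℝ)/μ + 1/μ := by ring
        rw [this] at hk2
        linarith
      exact_mod_cast this
    exact Finset.mem_Ico.2 ⟨hck, hkc⟩
  calc _ ≤ (Finset.Ico c (c + N)).card := Finset.card_le_card hsub
    _ = N := by rw [Nat.card_Ico]; omega

lemma aux_fiber_sum (μ : ℝ) (hμ0 : 0 < μ) (hμ1 : μ ≤ 1) (N : ℕ) (hN : 1 / μ ≤ N)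
    (f : ℕ → ℝ) (hf : ∀ m, 0 ≤ f m) (n : ℕ) :
    ∑ k ∈ Finset.range n, f ⌊(k : ℝ) * μ⌋₊ ≤ N * ∑ m ∈ Finset.range n, f m := by
  rw [Finset.sum_comp]
  have himage : (Finset.range n).image (fun k : ℕ => ⌊(k : ℝ) * μ⌋₊) ⊆ Finset.range n := by
    intro m hm
    simp only [Finset.mem_image, Finset.mem_range] at hm ⊢
    obtain ⟨k, hk, rfl⟩ := hm
    calc ⌊(k : ℝ) * μ⌋₊ ≤ ⌊(k : ℝ)⌋₊ := Nat.floor_le_floor (by nlinarith [Nat.cast_nonneg (α := ℝ) k])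
      _ = k := Nat.floor_natCast k
      _ < n := hk
  calc ∑ b ∈ (Finset.range n).image (fun k : ℕ => ⌊(k : ℝ) * μ⌋₊),
        ({a ∈ Finset.range n | ⌊(a : ℝ) * μ⌋₊ = b} : Finset ℕ).card • f b
      ≤ ∑ b ∈ (Finset.range n).image (fun k : ℕ => ⌊(k : ℝ) * μ⌋₊), (N : ℝ) * f b := by
        apply Finset.sum_le_sum
        intro b hb
        rw [nsmul_eq_mul]
        exact mul_le_mul_of_nonneg_right
          (by exact_mod_cast aux_fiber_card μ hμ0 N hN n b) (hf b)
    _ ≤ ∑ b ∈ Finset.range n, (N : ℝ) * f b := by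
        apply Finset.sum_le_sum_of_subset_of_nonneg himage
        intro i _ _
        exact mul_nonneg (Nat.cast_nonneg N) (hf i)
    _ = N * ∑ m ∈ Finset.range n, f m := by rw [Finset.mul_sum]

lemma aux_term_nonneg (μ w : ℝ) (hμ0 : 0 < μ) (hw0 : 0 ≤ w) (k : ℕ) :
    0 ≤ (w ^ μ) ^ k / Real.Gamma ((k : ℝ) * μ + 1) := by
  have h : (0:ℝ) < (k : ℝ) * μ + 1 := by positivity
  exact div_nonneg (pow_nonneg (Real.rpow_nonneg hw0 μ) k) (Real.Gamma_pos_of_pos h).le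

lemma core_sum_range_le (μ w : ℝ) (hμ0 : 0 < μ) (hμ1 : μ ≤ 1) (hw : 1 ≤ w) (n : ℕ) :
    ∑ k ∈ Finset.range n, (w ^ μ) ^ k / Real.Gamma ((k : ℝ) * μ + 1)
      ≤ (2 * ((⌊1 / μ⌋₊ : ℝ) + 1)) * (w * Real.exp w) := by
  have hw0 : (0 : ℝ) ≤ w := by linarith
  set N : ℕ := ⌊1 / μ⌋₊ + 1 with hNdef
  have hN : 1 / μ ≤ (N : ℝ) := by
    rw [hNdef]
    push_cast
    exact (Nat.lt_floor_add_one (1 / μ)).le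
  set f : ℕ → ℝ := fun m => w ^ (m + 1) / (Nat.factorial m : ℝ) with hfdef
  have hf : ∀ m, 0 ≤ f m := fun m => div_nonneg (pow_nonneg hw0 _) (Nat.cast_nonneg _)
  have hterm : ∀ k : ℕ, (w ^ μ) ^ k / Real.Gamma ((k : ℝ) * μ + 1)
      ≤ 2 * f ⌊(k : ℝ) * μ⌋₊ := by
    intro k
    have hx : (0 : ℝ) ≤ (k : ℝ) * μ := by positivity
    have hgpos : 0 < Real.Gamma ((k : ℝ) * μ + 1) := Real.Gamma_pos_of_pos (by linarith)
    have hfac := aux_fact_le_gamma ((k : ℝ) * μ) hx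
    have hfacpos : (0 : ℝ) < (Nat.factorial ⌊(k : ℝ) * μ⌋₊ : ℝ) := by
      exact_mod_cast Nat.factorial_pos _
    have hnum : (w ^ μ) ^ k ≤ w ^ (⌊(k : ℝ) * μ⌋₊ + 1) := by
      have h1 : (w ^ μ) ^ k = w ^ ((k : ℝ) * μ) := by
        rw [← Real.rpow_natCast (w ^ μ) k, ← Real.rpow_mul hw0]
        ring_nf
      have h2 : w ^ ((⌊(k : ℝ) * μ⌋₊ + 1 : ℕ) : ℝ) = w ^ (⌊(k : ℝ) * μ⌋₊ + 1) :=
        Real.rpow_natCast _ _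
      rw [h1, ← h2]
      apply Real.rpow_le_rpow_of_exponent_le hw
      push_cast
      exact (Nat.lt_floor_add_one _).le
    calc (w ^ μ) ^ k / Real.Gamma ((k : ℝ) * μ + 1)
        ≤ w ^ (⌊(k : ℝ) * μ⌋₊ + 1) / Real.Gamma ((k : ℝ) * μ + 1) := by
          gcongr
      _ ≤ 2 * f ⌊(k : ℝ) * μ⌋₊ := by
          rw [hfdef]
          have h3 : w ^ (⌊(k : ℝ) * μ⌋₊ + 1) / Real.Gamma ((k : ℝ) * μ + 1)
              ≤ w ^ (⌊(k : ℝ) * μ⌋₊ + 1) / ((Nat.factorial ⌊(k : ℝ) * μ⌋₊ : ℝ) / 2) := by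
            apply div_le_div_of_nonneg_left (pow_nonneg hw0 _) (by linarith) (by linarith)
          calc _ ≤ _ := h3
            _ = 2 * (w ^ (⌊(k : ℝ) * μ⌋₊ + 1) / (Nat.factorial ⌊(k : ℝ) * μ⌋₊ : ℝ)) := by
              field_simp
  calc ∑ k ∈ Finset.range n, (w ^ μ) ^ k / Real.Gamma ((k : ℝ) * μ + 1)
      ≤ ∑ k ∈ Finset.range n, 2 * f ⌊(k : ℝ) * μ⌋₊ := Finset.sum_le_sum fun k _ => hterm k
    _ = 2 * ∑ k ∈ Finset.range n, f ⌊(k : ℝ) * μ⌋₊ := by rw [Finset.mul_sum]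
    _ ≤ 2 * ((N : ℝ) * ∑ m ∈ Finset.range n, f m) := by
        have := aux_fiber_sum μ hμ0 hμ1 N hN f hf n
        linarith
    _ ≤ 2 * ((N : ℝ) * (w * Real.exp w)) := by
        have hsum : ∑ m ∈ Finset.range n, f m ≤ w * Real.exp w := by
          have : ∑ m ∈ Finset.range n, f m = w * ∑ m ∈ Finset.range n, w ^ m / (Nat.factorial m : ℝ) := by
            rw [Finset.mul_sum]
            apply Finset.sum_congr rfl
            intro m _
            rw [hfdef]
            field_simp [pow_succ]
            ring
          rw [this]
          exact mul_le_mul_of_nonneg_left (Real.sum_le_exp_of_nonneg hw0 n) hw0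
        have hNpos : (0:ℝ) ≤ (N:ℝ) := Nat.cast_nonneg _
        nlinarith [Finset.sum_nonneg fun m (_ : m ∈ Finset.range n) => hf m]
    _ = (2 * ((⌊1 / μ⌋₊ : ℝ) + 1)) * (w * Real.exp w) := by
        rw [hNdef]; push_cast; ring

lemma core_summable (μ w : ℝ) (hμ0 : 0 < μ) (hμ1 : μ ≤ 1) (hw : 1 ≤ w) :
    Summable (fun k : ℕ => (w ^ μ) ^ k / Real.Gamma ((k : ℝ) * μ + 1)) :=
  summable_of_sum_range_le (fun k => aux_term_nonneg μ w hμ0 (by linarith) k)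
    (core_sum_range_le μ w hμ0 hμ1 hw)

lemma core_tsum_le (μ w : ℝ) (hμ0 : 0 < μ) (hμ1 : μ ≤ 1) (hw : 1 ≤ w) :
    (∑' k : ℕ, (w ^ μ) ^ k / Real.Gamma ((k : ℝ) * μ + 1))
      ≤ (2 * ((⌊1 / μ⌋₊ : ℝ) + 1)) * (w * Real.exp w) :=
  Real.tsum_le_of_sum_range_le (fun k => aux_term_nonneg μ w hμ0 (by linarith) k)
    (core_sum_range_le μ w hμ0 hμ1 hw)

lemma core_tsum_ge (μ w : ℝ) (hμ0 : 0 < μ) (hμ1 : μ ≤ 1) (hw : 1 ≤ w) :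
    (Real.exp w - 1 - w) / w ≤ ∑' k : ℕ, (w ^ μ) ^ k / Real.Gamma ((k : ℝ) * μ + 1) := by
  have hw0 : (0:ℝ) < w := by linarith
  set e : ℕ → ℕ := fun m => ⌈((m : ℝ) + 1) / μ⌉₊ with hedef
  have he : StrictMono e := by
    have hstep : ∀ m : ℕ, e m < e (m + 1) := by
      intro m
      have h0 : (0:ℝ) ≤ ((m:ℝ) + 1) / μ := by positivity
      have h1 : e m + 1 = ⌈((m : ℝ) + 1) / μ + 1⌉₊ := by
        rw [hedef]; exact (Nat.ceil_add_one h0).symm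
      have h2 : ((m : ℝ) + 1) / μ + 1 ≤ ((m : ℝ) + 2) / μ := by
        rw [div_add' _ _ _ (ne_of_gt hμ0), div_le_div_iff₀ hμ0 hμ0]
        nlinarith
      have h3 : ⌈((m : ℝ) + 1) / μ + 1⌉₊ ≤ ⌈((m : ℝ) + 2) / μ⌉₊ := Nat.ceil_le_ceil h2
      have : e (m+1) = ⌈((m : ℝ) + 2) / μ⌉₊ := by rw [hedef]; push_cast; ring_nf
      omega
    exact strictMono_nat_of_lt_succ hstep
  set g : ℕ → ℝ := fun m => w ^ (m + 1) / (Nat.factorial (m + 2) : ℝ) with hgdef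
  have hsumg : Summable g := by
    have h1 : Summable (fun m : ℕ => w ^ (m + 2) / (Nat.factorial (m + 2) : ℝ)) :=
      (summable_nat_add_iff 2).2 (Real.summable_pow_div_factorial w)
    have h2 := h1.mul_left (1 / w)
    apply h2.congr
    intro m
    rw [hgdef]
    field_simp
    ring
  have hsumf := core_summable μ w hμ0 hμ1 hw
  have hle : ∀ m : ℕ, g m ≤ (w ^ μ) ^ (e m) / Real.Gamma (((e m) : ℝ) * μ + 1) := by
    intro m
    have hcl : ((m : ℝ) + 1) / μ ≤ (e m : ℝ) := Nat.le_ceil _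
    have hx1 : (m : ℝ) + 1 ≤ (e m : ℝ) * μ := by
      rw [div_le_iff₀ hμ0] at hcl
      linarith
    have hxup : (e m : ℝ) * μ ≤ (m : ℝ) + 2 := by
      have hceil : (e m : ℝ) < ((m : ℝ) + 1) / μ + 1 :=
        Nat.ceil_lt_add_one (by positivity)
      have := mul_lt_mul_of_pos_right hceil hμ0
      rw [div_add' _ _ _ (ne_of_gt hμ0)] at this
      rw [div_mul_cancel₀] at this
      · nlinarith
      · exact ne_of_gt hμ0
    have hx1' : (1 : ℝ) ≤ (e m : ℝ) * μ := by
      have : (1:ℝ) ≤ (m:ℝ) + 1 := by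
        have := Nat.cast_nonneg (α := ℝ) m
        linarith
      linarith
    have hgam : Real.Gamma ((e m : ℝ) * μ + 1) ≤ (Nat.factorial (m + 2) : ℝ) := by
      have h1 := aux_gamma_le_fact ((e m : ℝ) * μ) hx1'
      have h2 : ⌈(e m : ℝ) * μ⌉₊ ≤ m + 2 := by
        apply Nat.ceil_le.2
        push_cast
        exact hxup
      have h3 : (Nat.factorial ⌈(e m : ℝ) * μ⌉₊ : ℝ) ≤ (Nat.factorial (m + 2) : ℝ) := by
        exact_mod_cast Nat.factorial_le h2
      linarith
    have hnum : w ^ (m + 1) ≤ (w ^ μ) ^ (e m) := by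
      have h1 : (w ^ μ) ^ (e m) = w ^ ((e m : ℝ) * μ) := by
        rw [← Real.rpow_natCast (w ^ μ) (e m), ← Real.rpow_mul (le_of_lt hw0)]
        ring_nf
      have h2 : w ^ ((m + 1 : ℕ) : ℝ) = w ^ (m + 1) := Real.rpow_natCast _ _
      rw [h1, ← h2]
      apply Real.rpow_le_rpow_of_exponent_le hw
      push_cast
      exact hx1
    have hgpos : 0 < Real.Gamma ((e m : ℝ) * μ + 1) := Real.Gamma_pos_of_pos (by linarith)
    have hfacpos : (0:ℝ) < (Nat.factorial (m + 2) : ℝ) := by exact_mod_cast Nat.factorial_pos _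
    rw [hgdef]
    exact div_le_div₀ (pow_nonneg (Real.rpow_nonneg hw0.le μ) _) hnum hgpos hgam
  have hmain : (∑' m, g m) ≤ ∑' k : ℕ, (w ^ μ) ^ k / Real.Gamma ((k : ℝ) * μ + 1) :=
    hsumg.tsum_le_tsum_of_inj e he.injective
      (fun c _ => aux_term_nonneg μ w hμ0 hw0.le c) hle hsumf
  have hg_val : (∑' m, g m) = (Real.exp w - 1 - w) / w := by
    have hexp : Real.exp w = ∑' n : ℕ, w ^ n / (Nat.factorial n : ℝ) := by
      rw [Real.exp_eq_exp_ℝ, NormedSpace.exp_eq_tsum_div]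
    have hshift := Summable.sum_add_tsum_nat_add (f := fun n : ℕ => w ^ n / (Nat.factorial n : ℝ)) 2
      (Real.summable_pow_div_factorial w)
    rw [← hexp] at hshift
    have hs2 : ∑ i ∈ Finset.range 2, w ^ i / (Nat.factorial i : ℝ) = 1 + w := by
      simp [Finset.sum_range_succ, Nat.factorial]
    rw [hs2] at hshift
    have htail : (∑' m : ℕ, w ^ (m + 2) / (Nat.factorial (m + 2) : ℝ)) = Real.exp w - 1 - w := by
      linarith
    have hgw : ∀ m : ℕ, g m = (1 / w) * (w ^ (m + 2) / (Nat.factorial (m + 2) : ℝ)) := by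
      intro m
      rw [hgdef]
      field_simp
      ring
    calc (∑' m, g m) = ∑' m : ℕ, (1 / w) * (w ^ (m + 2) / (Nat.factorial (m + 2) : ℝ)) := by
          exact tsum_congr hgw
      _ = (1 / w) * (∑' m : ℕ, w ^ (m + 2) / (Nat.factorial (m + 2) : ℝ)) := tsum_mul_left
      _ = (Real.exp w - 1 - w) / w := by rw [htail]; ring
  rwa [hg_val] at hmain
/-- Long-time behaviour of the ratio of the fractional to the conventional solution:
for `0 < α < 1`, `λ > 0`, with `R(t) = E_{1−α}(λ t^{1−α}) / e^{λ t}` where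
`E_{1−α}(z) = ∑_k z^k / Γ(k(1−α)+1)`, if `λ < 1` then `R(t) → 0` as `t → ∞`,
and if `λ > 1` then `R(t) → ∞`. -/

theorem fractional_vs_conventional_ratio (α l : ℝ) (hα0 : 0 < α) (hα1 : α < 1)
    (hl : 0 < l) :
    (l < 1 → Filter.Tendsto
      (fun t : ℝ =>
        (∑' k : ℕ, (l * t ^ (1 - α)) ^ k / Real.Gamma ((k : ℝ) * (1 - α) + 1)) /
          Real.exp (l * t))
      Filter.atTop (nhds 0)) ∧
    (1 < l → Filter.Tendsto
      (fun t : ℝ =>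
        (∑' k : ℕ, (l * t ^ (1 - α)) ^ k / Real.Gamma ((k : ℝ) * (1 - α) + 1)) /
          Real.exp (l * t))
      Filter.atTop Filter.atTop) := by
  set μ : ℝ := 1 - α with hμdef
  have hμ0 : 0 < μ := by rw [hμdef]; linarith
  have hμ1 : μ < 1 := by rw [hμdef]; linarith
  set b : ℝ := l ^ (1 / μ) with hbdef
  have hb : 0 < b := Real.rpow_pos_of_pos hl _
  have hbμ : b ^ μ = l := by
    have h := (Real.rpow_mul hl.le (1/μ) μ).symm
    rw [hbdef, h, one_div, inv_mul_cancel₀ (ne_of_gt hμ0), Real.rpow_one]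
  have hbμ' : ∀ t : ℝ, 0 ≤ t → l * t ^ μ = (b * t) ^ μ := by
    intro t ht
    rw [Real.mul_rpow hb.le ht, hbμ]
  have hkey : ∀ t : ℝ, 0 ≤ t →
      (∑' k : ℕ, (l * t ^ μ) ^ k / Real.Gamma ((k : ℝ) * μ + 1))
        = ∑' k : ℕ, ((b * t) ^ μ) ^ k / Real.Gamma ((k : ℝ) * μ + 1) := by
    intro t ht
    exact tsum_congr fun k => by rw [hbμ' t ht]
  have hinvμ : 1 < 1 / μ := (one_lt_div hμ0).2 hμ1
  constructor
  · -- case l < 1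
    intro hl1
    have hbl : b < l := by
      have := Real.rpow_lt_rpow_of_exponent_gt hl hl1 hinvμ
      rwa [Real.rpow_one] at this
    set c : ℝ := l - b with hcdef
    have hc : 0 < c := by rw [hcdef]; linarith
    set K : ℝ := 2 * ((⌊1 / μ⌋₊ : ℝ) + 1) with hKdef
    have hK : 0 < K := by
      rw [hKdef]; positivity
    have hgtends : Tendsto (fun t : ℝ => (K * b / c) * ((c * t) * Real.exp (-(c * t))))
        atTop (nhds 0) := by
      have h1 : Tendsto (fun x : ℝ => x ^ 1 * Real.exp (-x)) atTop (nhds 0) :=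
        Real.tendsto_pow_mul_exp_neg_atTop_nhds_zero 1
      have h2 : Tendsto (fun t : ℝ => c * t) atTop atTop :=
        Tendsto.const_mul_atTop hc tendsto_id
      have h3 := (h1.comp h2).const_mul (K * b / c)
      simpa [pow_one, Function.comp] using h3
    apply squeeze_zero' (g := fun t => (K * b / c) * ((c * t) * Real.exp (-(c * t))))
    · filter_upwards [eventually_ge_atTop (0:ℝ)] with t ht
      apply div_nonneg _ (Real.exp_pos _).le
      rw [hkey t ht]
      exact tsum_nonneg fun k => aux_term_nonneg μ (b*t) hμ0 (by positivity) k
    · filter_upwards [eventually_ge_atTop (1/b)] with t ht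
      have ht0 : 0 ≤ t := le_trans (by positivity) ht
      have hw1 : 1 ≤ b * t := by
        rw [div_le_iff₀ hb] at ht
        nlinarith
      rw [hkey t ht0]
      have h1 := core_tsum_le μ (b*t) hμ0 hμ1.le hw1
      have h2 : (∑' k : ℕ, ((b*t) ^ μ) ^ k / Real.Gamma ((k : ℝ) * μ + 1)) / Real.exp (l * t)
          ≤ (K * ((b*t) * Real.exp (b*t))) / Real.exp (l * t) := by
        gcongr
      refine h2.trans (le_of_eq ?_)
      have ht' : t ≠ 0 := by
        intro h; rw [h] at hw1; simp at hw1; linarith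
      rw [show -(c * t) = b * t - l * t by rw [hcdef]; ring, Real.exp_sub]
      field_simp
    · exact hgtends
  · -- case 1 < l
    intro hl2
    have hbl : l < b := by
      have := Real.rpow_lt_rpow_of_exponent_lt hl2 hinvμ
      rwa [Real.rpow_one] at this
    set c : ℝ := b - l with hcdef
    have hc : 0 < c := by rw [hcdef]; linarith
    have hhtends : Tendsto (fun t : ℝ => (c / (2 * b)) * (Real.exp (c * t) / (c * t)))
        atTop atTop := by
      have h1 : Tendsto (fun x : ℝ => Real.exp x / x ^ 1) atTop atTop :=
        Real.tendsto_exp_div_pow_atTop 1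
      have h2 : Tendsto (fun t : ℝ => c * t) atTop atTop :=
        Tendsto.const_mul_atTop hc tendsto_id
      have h3 := Tendsto.const_mul_atTop (show 0 < c / (2*b) by positivity) (h1.comp h2)
      simpa [pow_one, Function.comp] using h3
    apply tendsto_atTop_mono' atTop _ hhtends
    filter_upwards [eventually_ge_atTop (3/b)] with t ht
    have ht0 : 0 ≤ t := le_trans (by positivity) ht
    have hw3 : 3 ≤ b * t := by
      rw [div_le_iff₀ hb] at ht
      nlinarith
    have hw1 : 1 ≤ b * t := by linarith
    have hw0 : 0 < b * t := by linarith
    set w : ℝ := b * t with hwdef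
    have hexp2 : 2 * (1 + w) ≤ Real.exp w := by
      have h := Real.sum_le_exp_of_nonneg (show (0:ℝ) ≤ w by linarith) 3
      have hs : ∑ i ∈ Finset.range 3, w ^ i / (Nat.factorial i : ℝ) = 1 + w + w^2/2 := by
        simp [Finset.sum_range_succ, Nat.factorial]
        try ring
      rw [hs] at h
      nlinarith [sq_nonneg (w - 3)]
    rw [hkey t ht0]
    have h1 := core_tsum_ge μ w hμ0 hμ1.le hw1
    have h2 : (Real.exp w / 2) / w ≤ (Real.exp w - 1 - w) / w := by
      gcongr
      linarith
    have h3 : ((Real.exp w / 2) / w) / Real.exp (l * t)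
        ≤ (∑' k : ℕ, (w ^ μ) ^ k / Real.Gamma ((k : ℝ) * μ + 1)) / Real.exp (l * t) := by
      gcongr
      exact le_trans h2 h1
    refine le_trans (le_of_eq ?_) h3
    have ht' : (0:ℝ) < t := by nlinarith
    have hne : b * t - l * t ≠ 0 := by nlinarith
    rw [show c * t = w - l * t from by rw [hcdef, hwdef]; ring, Real.exp_sub,
      hcdef, hwdef]
    field_simp [hne]
    exact div_self (sub_ne_zero.2 hbl.ne')
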